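/- For every infinite run M₀ →t₁→ M₁ →t₂→ M₂ → ⋯ of a net in Z_R HSA(I), there exist indices i < j such that M_i ≤ M_j componentwise and Compat_m(M_i, M_j) holds, where m is the maximum Index of the transitions t_{i+1}, …, t_j. -/

import Mathlib

/-- An arc from a place to a transition: an ordinary weighted arc, an
inhibitor arc, a reset arc, or a transfer arc to the place `p'`. -/
inductive Arc (P : Type) where
  | weight : ℕ → Arc P
  | inhibitor : Arc P
  | reset : Arc P
  | transfer : P → Arc P
  deriving DecidableEq

namespace Arc

/-- Whether the arc is an ordinary weighted arc, i.e. `F(p,t) ∈ ℕ`. -/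
def isNat {P : Type} : Arc P → Bool
  | weight _ => true
  | _ => false

end Arc

/-- A Petri net with special arcs: places `Fin np`, transitions `Fin nt`,
pre-arcs (possibly special), post-arcs (ordinary) and an initial marking. -/
structure SNet where
  np : ℕ
  nt : ℕ
  pre : Fin np → Fin nt → Arc (Fin np)
  post : Fin nt → Fin np → ℕ
  init : Fin np → ℕ

namespace SNet

/-- A marking assigns a number of tokens to each place. -/
abbrev Marking (N : SNet) := Fin N.np → ℕ

/-- A transition `t` is firable at `M` if `M p ≥ F(p,t)` for ordinary
pre-arcs and `M p = 0` for inhibitor pre-arcs. -/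
def Firable (N : SNet) (M : N.Marking) (t : Fin N.nt) : Prop :=
  ∀ p, match N.pre p t with
    | Arc.weight n => n ≤ M p
    | Arc.inhibitor => M p = 0
    | _ => True

/-- The marking obtained by firing `t` at `M`: remove `F(p,t)` tokens for
ordinary arcs, empty reset places, move all tokens of transfer places to
their targets, then add `F(t,p)` tokens everywhere. -/
def fire (N : SNet) (M : N.Marking) (t : Fin N.nt) : N.Marking := fun p =>
  (match N.pre p t with
    | Arc.weight n => M p - n
    | Arc.inhibitor => M p
    | Arc.reset => 0
    | Arc.transfer _ => 0)
  + (∑ q : Fin N.np, if N.pre q t = Arc.transfer p then M q else 0)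
  + N.post t p

/-- `FireSeq N M ts M'` : firing the sequence `ts` from `M` is possible and
leads to `M'`. -/
def FireSeq (N : SNet) : N.Marking → List (Fin N.nt) → N.Marking → Prop
  | M, [], M' => M' = M
  | M, t :: ts, M' => Firable N M t ∧ FireSeq N (fire N M t) ts M'

/-- `M'` is reachable from `M` by firing some finite sequence of transitions. -/
def Reach (N : SNet) (M M' : N.Marking) : Prop := ∃ ts, FireSeq N M ts M'

/-- The marking after the first `k` firings of the infinite sequence `seq`. -/
def markingAt (N : SNet) (M0 : N.Marking) (seq : ℕ → Fin N.nt) : ℕ → N.Marking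
  | 0 => M0
  | k + 1 => fire N (markingAt N M0 seq k) (seq k)

/-- `N` has an infinite run from `M0`. -/
def InfRun (N : SNet) (M0 : N.Marking) : Prop :=
  ∃ seq : ℕ → Fin N.nt, ∀ k, N.Firable (N.markingAt M0 seq k) (seq k)

/-- A marking is deadlocked if no transition is firable at it. -/
def Deadlocked (N : SNet) (M : N.Marking) : Prop := ∀ t, ¬ N.Firable M t

/-- All special arcs respect the hierarchy `le`:
`F(p,t) ∉ ℕ` and `q ⊑ p` imply `F(q,t) ∉ ℕ`. -/
def RespectsHierarchy (N : SNet) (le : Fin N.np → Fin N.np → Prop) : Prop :=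
  ∀ p t, (N.pre p t).isNat = false → ∀ q, le q p → (N.pre q t).isNat = false

/-- The inhibitor arcs respect the hierarchy `le`:
`F(p,t) = I` and `q ⊑ p` imply `F(q,t) ∉ ℕ`. -/
def InhRespectsHierarchy (N : SNet) (le : Fin N.np → Fin N.np → Prop) : Prop :=
  ∀ p t, N.pre p t = Arc.inhibitor → ∀ q, le q p → (N.pre q t).isNat = false

def NoTransfer (N : SNet) : Prop := ∀ p t p', N.pre p t ≠ Arc.transfer p'

def NoReset (N : SNet) : Prop := ∀ p t, N.pre p t ≠ Arc.reset

def NoInhibitor (N : SNet) : Prop := ∀ p t, N.pre p t ≠ Arc.inhibitor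

/-- `Index(p)` : the number of places `q` with `q ⊑ p`. -/
noncomputable def placeIndex (N : SNet) (le : Fin N.np → Fin N.np → Prop)
    (p : Fin N.np) : ℕ :=
  Nat.card {q : Fin N.np // le q p}

/-- `Index(t)` : the maximum `Index(p)` over the inhibitor pre-places `p`
of `t` (0 if there are none). -/
noncomputable def transIndex (N : SNet) (le : Fin N.np → Fin N.np → Prop)
    (t : Fin N.nt) : ℕ :=
  (Finset.univ.filter (fun p => N.pre p t = Arc.inhibitor)).sup (N.placeIndex le)

/-- `Compat_i(M₁, M₂)` : `M₁` and `M₂` agree on all places of index at most `i`. -/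
def Compat (N : SNet) (le : Fin N.np → Fin N.np → Prop) (i : ℕ)
    (M₁ M₂ : N.Marking) : Prop :=
  ∀ p, N.placeIndex le p ≤ i → M₁ p = M₂ p

/-- The maximum `Index` of the transitions occurring in the run `ρ`. -/
noncomputable def runMaxIndex (N : SNet) (le : Fin N.np → Fin N.np → Prop)
    (ρ : List (Fin N.nt)) : ℕ :=
  (ρ.map (N.transIndex le)).foldr max 0

/-- Membership in HSA(IR): only inhibitor and reset special arcs, all of
which respect some hierarchy. -/
def IsHSA_IR (N : SNet) : Prop :=
  ∃ le : Fin N.np → Fin N.np → Prop, IsLinearOrder (Fin N.np) le ∧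
    N.RespectsHierarchy le ∧ N.NoTransfer

/-- Membership in HSA(T): only transfer special arcs, all of which respect
some hierarchy. -/
def IsHSA_T (N : SNet) : Prop :=
  ∃ le : Fin N.np → Fin N.np → Prop, IsLinearOrder (Fin N.np) le ∧
    N.RespectsHierarchy le ∧ N.NoReset ∧ N.NoInhibitor

/-- Membership in HSA(IT): only inhibitor and transfer special arcs, all of
which respect some hierarchy. -/
def IsHSA_IT (N : SNet) : Prop :=
  ∃ le : Fin N.np → Fin N.np → Prop, IsLinearOrder (Fin N.np) le ∧
    N.RespectsHierarchy le ∧ N.NoReset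

/-- Membership in HSA(IRcT): inhibitor, reset and transfer special arcs all
respect some hierarchy, and each transfer arc's target place is connected to
the transition by an ordinary arc. -/
def IsHSA_IRcT (N : SNet) : Prop :=
  ∃ le : Fin N.np → Fin N.np → Prop, IsLinearOrder (Fin N.np) le ∧
    N.RespectsHierarchy le ∧
    (∀ p t p', N.pre p t = Arc.transfer p' → (N.pre p' t).isNat = true)

/-- The number of transitions having at least one reset pre-arc. -/
def resetTransCount (N : SNet) : ℕ :=
  (Finset.univ.filter (fun t : Fin N.nt => ∃ p, N.pre p t = Arc.reset)).card

/-- The number of transitions having at least one reset or transfer pre-arc. -/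
def resetOrTransferTransCount (N : SNet) : ℕ :=
  (Finset.univ.filter (fun t : Fin N.nt =>
    ∃ p, N.pre p t = Arc.reset ∨ ∃ p', N.pre p t = Arc.transfer p')).card

/-- The number of transitions having at least one special (non-ordinary) pre-arc. -/
def specialTransCount (N : SNet) : ℕ :=
  (Finset.univ.filter (fun t : Fin N.nt => ∃ p, (N.pre p t).isNat = false)).card

/-- The number of reset arcs. -/
def resetArcCount (N : SNet) : ℕ :=
  (Finset.univ.filter
    (fun pt : Fin N.np × Fin N.nt => N.pre pt.1 pt.2 = Arc.reset)).card

/-- The number of inhibitor arcs. -/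
def inhibitorArcCount (N : SNet) : ℕ :=
  (Finset.univ.filter
    (fun pt : Fin N.np × Fin N.nt => N.pre pt.1 pt.2 = Arc.inhibitor)).card

/-- The number of transfer arcs. -/
def transferArcCount (N : SNet) : ℕ :=
  (Finset.univ.filter
    (fun pt : Fin N.np × Fin N.nt => ∃ p', N.pre pt.1 pt.2 = Arc.transfer p')).card

/-- The number of places having at least one inhibitor arc out of them. -/
def inhibitorPlaceCount (N : SNet) : ℕ :=
  (Finset.univ.filter (fun p : Fin N.np => ∃ t, N.pre p t = Arc.inhibitor)).card

end SNet


section Aux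

variable (N : SNet) (le : Fin N.np → Fin N.np → Prop)

private lemma placeIndex_pos (hlin : IsLinearOrder (Fin N.np) le) (p : Fin N.np) :
    1 ≤ N.placeIndex le p := by
  haveI := hlin
  have hne : Nonempty {q : Fin N.np // le q p} := ⟨⟨p, refl_of le p⟩⟩
  exact Nat.one_le_iff_ne_zero.2 (Nat.card_ne_zero.2 ⟨hne, inferInstance⟩)

private lemma le_of_index_le (hlin : IsLinearOrder (Fin N.np) le) {p q : Fin N.np}
    (h : N.placeIndex le p ≤ N.placeIndex le q) : le p q := by
  haveI := hlin
  by_contra hpq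
  have hqp : le q p := (total_of le p q).resolve_left hpq
  have hsub : {x | le x q} ⊆ {x | le x p} := fun x hx => _root_.trans hx hqp
  have hss : {x | le x q} ⊂ {x | le x p} := by
    rw [Set.ssubset_def]
    exact ⟨hsub, fun h2 => hpq (h2 (refl_of le p))⟩
  have hlt := Set.ncard_lt_ncard hss (Set.toFinite _)
  have e1 : N.placeIndex le p = Set.ncard {x | le x p} := Nat.card_coe_set_eq _
  have e2 : N.placeIndex le q = Set.ncard {x | le x q} := Nat.card_coe_set_eq _
  omega

private lemma fire_low (hlin : IsLinearOrder (Fin N.np) le)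
    (hresp : N.InhRespectsHierarchy le) (hnt : N.NoTransfer)
    {M : N.Marking} {t : Fin N.nt} (hf : N.Firable M t)
    {p : Fin N.np} (hp : N.placeIndex le p ≤ N.transIndex le t) :
    N.fire M t p = N.post t p := by
  classical
  have h1 := placeIndex_pos N le hlin p
  have hne : (Finset.univ.filter (fun q => N.pre q t = Arc.inhibitor)).Nonempty := by
    rcases Finset.eq_empty_or_nonempty
      (Finset.univ.filter (fun q => N.pre q t = Arc.inhibitor)) with he | h
    · rw [SNet.transIndex, he, Finset.sup_empty, Nat.bot_eq_zero] at hp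
      omega
    · exact h
  obtain ⟨q, hqmem, hq⟩ := Finset.exists_mem_eq_sup _ hne (N.placeIndex le)
  rw [Finset.mem_filter] at hqmem
  have hp' : N.placeIndex le p ≤ N.placeIndex le q := by
    rw [SNet.transIndex, hq] at hp; exact hp
  have hlepq : le p q := le_of_index_le N le hlin hp'
  have hnat := hresp q t hqmem.2 p hlepq
  have hsum : (∑ q' : Fin N.np, if N.pre q' t = Arc.transfer p then M q' else 0) = 0 :=
    Finset.sum_eq_zero fun x _ => if_neg (hnt x t p)
  cases hpre : N.pre p t with
  | weight n => rw [hpre] at hnat; simp [Arc.isNat] at hnat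
  | inhibitor =>
    have hM0 : M p = 0 := by
      have := hf p
      rw [hpre] at this
      exact this
    simp only [SNet.fire, hpre, hM0, hsum, zero_add]
  | reset => simp only [SNet.fire, hpre, hsum, zero_add]
  | transfer p' => exact absurd hpre (hnt p t p')

end Aux

/-- along every infinite run of a `Z_R HSA(I)` net there are
positions `i < j` with `M_i ≤ M_j` and `Compat_m(M_i, M_j)`, where `m` is
the maximum index of the transitions `t_{i+1}, …, t_j`. -/
theorem zr_hsa_i_infinite_run_subsumed_pair (N : SNet)
    (le : Fin N.np → Fin N.np → Prop) (hlin : IsLinearOrder (Fin N.np) le)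
    (hresp : N.InhRespectsHierarchy le) (hnt : N.NoTransfer)
    (seq : ℕ → Fin N.nt)
    (hrun : ∀ k, N.Firable (N.markingAt N.init seq k) (seq k)) :
    ∃ i j : ℕ, i < j ∧
      (∀ p, N.markingAt N.init seq i p ≤ N.markingAt N.init seq j p) ∧
      N.Compat le ((Finset.Ico i j).sup (fun k => N.transIndex le (seq k)))
        (N.markingAt N.init seq i) (N.markingAt N.init seq j) := by
  classical
  haveI := hlin
  haveI : Nonempty (Fin N.nt) := ⟨seq 0⟩
  set M := N.markingAt N.init seq with hM
  set Tinf : Set (Fin N.nt) := {t | {k | seq k = t}.Infinite} with hT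
  have hbad : {k | seq k ∉ Tinf}.Finite := by
    have hsub : {k | seq k ∉ Tinf} ⊆ ⋃ t ∈ {t | t ∉ Tinf}, {k | seq k = t} := by
      intro k hk
      exact Set.mem_biUnion hk rfl
    refine Set.Finite.subset (Set.Finite.biUnion (Set.toFinite _) ?_) hsub
    intro t ht
    exact Set.not_infinite.1 ht
  obtain ⟨K, hK⟩ := hbad.bddAbove
  have hKgood : ∀ k, K + 1 ≤ k → seq k ∈ Tinf := by
    intro k hk
    by_contra h
    have := hK h
    omega
  obtain ⟨t0, ht0⟩ := Finite.exists_infinite_fiber seq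
  have ht0' : t0 ∈ Tinf := by
    have h2 : (seq ⁻¹' {t0}).Infinite := Set.infinite_coe_iff.mp ht0
    refine h2.mono ?_
    intro k hk
    exact hk
  obtain ⟨tm, htm, htmax⟩ := Set.exists_max_image Tinf (N.transIndex le)
    (Set.toFinite _) ⟨t0, ht0'⟩
  set P : ℕ → Prop := fun k => K + 1 ≤ k ∧ seq k = tm with hP
  have hSinf : (setOf P).Infinite := by
    have h1 : ({k | seq k = tm} \ Set.Iio (K + 1)).Infinite :=
      Set.Infinite.diff htm (Set.finite_Iio (K + 1))
    refine h1.mono ?_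
    rintro k ⟨h1k, h2k⟩
    exact ⟨Nat.not_lt.1 h2k, h1k⟩
  have hpwo : Set.IsPWO (Set.univ : Set (Fin N.np → ℕ)) :=
    Set.isPWO_univ_iff.mpr inferInstance
  obtain ⟨a, b, hab, hab2⟩ := hpwo.exists_lt (f := fun n => M (Nat.nth P n + 1)) (fun n => Set.mem_univ _)
  set ka := Nat.nth P a with hka
  set kb := Nat.nth P b with hkb
  have hPa : P ka := Nat.nth_mem_of_infinite hSinf a
  have hPb : P kb := Nat.nth_mem_of_infinite hSinf b
  have hkakb : ka < kb := (Nat.nth_lt_nth hSinf).2 hab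
  refine ⟨ka + 1, kb + 1, by omega, fun p => hab2 p, ?_⟩
  intro p hp
  have hsup : (Finset.Ico (ka + 1) (kb + 1)).sup (fun k => N.transIndex le (seq k))
      ≤ N.transIndex le tm := by
    refine Finset.sup_le ?_
    intro k hk
    rw [Finset.mem_Ico] at hk
    have : seq k ∈ Tinf := hKgood k (by omega)
    exact htmax _ this
  have hp' : N.placeIndex le p ≤ N.transIndex le tm := le_trans hp hsup
  have ea : M (ka + 1) p = N.post tm p := by
    have hf := hrun ka
    rw [hPa.2] at hf
    have : M (ka + 1) = N.fire (M ka) (seq ka) := rfl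
    rw [this, hPa.2]
    exact fire_low N le hlin hresp hnt hf hp'
  have eb : M (kb + 1) p = N.post tm p := by
    have hf := hrun kb
    rw [hPb.2] at hf
    have : M (kb + 1) = N.fire (M kb) (seq kb) := rfl
    rw [this, hPb.2]
    exact fire_low N le hlin hresp hnt hf hp'
  rw [ea, eb]
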